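/- Let b > 2 be a real number and define the shifted geometric probability mass function p_k = (1/(b-1))·((b-2)/(b-1))^{k-2} for integers k ≥ 2 (so ∑_{k≥2} p_k = 1 and ∑_{k≥2} k·p_k = b). Then: (i) for every x ∈ [0,1], ∑_{k≥2} p_k·(k·x^{k-2} - (k-1)·x^{k-1}) = (2(b-1) - (2b-3)x)/((b-1) - (b-2)x)²; and (ii) if b ≥ 5/2, then max_{x∈[0,1]} (2(b-1) - (2b-3)x)/((b-1) - (b-2)x)² = (2b-3)²/(4(b-1)(b-2)), attained at x = (2b-5)(b-1)/((b-2)(2b-3)), so that 1 - 1/(max_{x∈[0,1]} G(x)) = 1/(2b-3)². -/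

import Mathlib

lemma hasSum_shift2 {f : ℕ → ℝ} {a : ℝ} (h0 : f 0 = 0) (h1 : f 1 = 0)
    (h : HasSum (fun n => f (n + 2)) a) : HasSum f a := by
  have hinj : Function.Injective (fun n : ℕ => n + 2) := fun a b hab => by simpa using hab
  have hv : ∀ x, x ∉ Set.range (fun n : ℕ => n + 2) → f x = 0 := by
    intro x hx
    match x with
    | 0 => exact h0
    | 1 => exact h1
    | (n+2) => exact absurd ⟨n, rfl⟩ hx
  exact (Function.Injective.hasSum_iff hinj hv).mp h

/-- For real `b > 2`, the shifted geometric offspring distribution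
`p_k = (1/(b-1))·((b-2)/(b-1))^(k-2)` for `k ≥ 2` is a probability mass function with mean
`b`; its associated function `G(x) = ∑_{k≥2} p_k (k x^(k-2) - (k-1) x^(k-1))` equals
`(2(b-1) - (2b-3)x)/((b-1)-(b-2)x)²` on `[0,1]`, and if `b ≥ 5/2` this is maximized over
`[0,1]` at `x = (2b-5)(b-1)/((b-2)(2b-3))` with maximum value `(2b-3)²/(4(b-1)(b-2))`, so
that the critical probability `1 - 1/(max G)` equals `1/(2b-3)²`. -/
theorem shifted_geometric_pc (b : ℝ) (hb : 2 < b) (p : ℕ → ℝ)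
    (hp : ∀ k : ℕ, p k = if 2 ≤ k then (1 / (b - 1)) * ((b - 2) / (b - 1)) ^ (k - 2) else 0) :
    (∑' k : ℕ, p k = 1) ∧ (∑' k : ℕ, (k : ℝ) * p k = b) ∧
      (∀ x ∈ Set.Icc (0 : ℝ) 1,
        ∑' k : ℕ, p k * ((k : ℝ) * x ^ (k - 2) - ((k : ℝ) - 1) * x ^ (k - 1))
          = (2 * (b - 1) - (2 * b - 3) * x) / ((b - 1) - (b - 2) * x) ^ 2) ∧
      (5 / 2 ≤ b →
        (2 * b - 5) * (b - 1) / ((b - 2) * (2 * b - 3)) ∈ Set.Icc (0 : ℝ) 1 ∧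
        (∀ x ∈ Set.Icc (0 : ℝ) 1,
          (2 * (b - 1) - (2 * b - 3) * x) / ((b - 1) - (b - 2) * x) ^ 2 ≤
            (2 * b - 3) ^ 2 / (4 * (b - 1) * (b - 2))) ∧
        (2 * (b - 1) - (2 * b - 3) * ((2 * b - 5) * (b - 1) / ((b - 2) * (2 * b - 3)))) /
            ((b - 1) - (b - 2) * ((2 * b - 5) * (b - 1) / ((b - 2) * (2 * b - 3)))) ^ 2
          = (2 * b - 3) ^ 2 / (4 * (b - 1) * (b - 2)) ∧
        1 - 1 / ((2 * b - 3) ^ 2 / (4 * (b - 1) * (b - 2))) = 1 / (2 * b - 3) ^ 2) := by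
  have hb1 : (0:ℝ) < b - 1 := by linarith
  have hb2 : (0:ℝ) < b - 2 := by linarith
  set r : ℝ := (b - 2) / (b - 1) with hr
  have hr0 : 0 ≤ r := by positivity
  have hr1 : r < 1 := by rw [hr, div_lt_one hb1]; linarith
  have h1r : 1 - r = 1 / (b - 1) := by
    rw [hr]; field_simp; norm_num
  have hp0 : p 0 = 0 := by simp [hp]
  have hp1 : p 1 = 0 := by simp [hp]
  have hp2 : ∀ n : ℕ, p (n + 2) = (1 / (b - 1)) * r ^ n := by
    intro n; simp [hp]
  refine ⟨?_, ?_, ?_, ?_⟩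
  · -- sum of p = 1
    have h := (hasSum_geometric_of_lt_one hr0 hr1).mul_left (1 / (b - 1))
    have hs : HasSum p ((1 / (b - 1)) * (1 - r)⁻¹) := by
      apply hasSum_shift2 hp0 hp1
      convert h using 1
      case e'_3 => rfl
      funext n; exact hp2 n
    have : (1 / (b - 1)) * (1 - r)⁻¹ = 1 := by
      rw [h1r]; field_simp
    rw [← this]; exact hs.tsum_eq
  · -- mean = b
    have hnorm : ‖r‖ < 1 := by rwa [Real.norm_eq_abs, abs_of_nonneg hr0]
    have A := tsum_coe_mul_geometric_of_norm_lt_one (𝕜 := ℝ) hnorm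
    have A' := hasSum_coe_mul_geometric_of_norm_lt_one (𝕜 := ℝ) hnorm
    have B := hasSum_geometric_of_lt_one hr0 hr1
    have C := (A'.add (B.mul_left 2)).mul_left (1 / (b - 1))
    have hs : HasSum (fun k : ℕ => (k : ℝ) * p k)
        ((1 / (b - 1)) * (r / (1 - r) ^ 2 + 2 * (1 - r)⁻¹)) := by
      apply hasSum_shift2 (by simp [hp0]) (by simp [hp1])
      convert C using 1
      case e'_3 => rfl
      funext n
      rw [hp2 n]
      push_cast
      ring
    have hval : (1 / (b - 1)) * (r / (1 - r) ^ 2 + 2 * (1 - r)⁻¹) = b := by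
      rw [h1r, hr]
      field_simp
      ring
    rw [← hval]; exact hs.tsum_eq
  · -- G(x) formula
    intro x hx
    obtain ⟨hx0, hx1⟩ := hx
    set t : ℝ := r * x with htdef
    have ht0 : 0 ≤ t := mul_nonneg hr0 hx0
    have ht1 : t < 1 := lt_of_le_of_lt (by nlinarith) hr1
    have hD : 0 < (b - 1) - (b - 2) * x := by nlinarith
    have h1t : 1 - t = ((b - 1) - (b - 2) * x) / (b - 1) := by
      rw [htdef, hr]; field_simp
    have hnorm : ‖t‖ < 1 := by rwa [Real.norm_eq_abs, abs_of_nonneg ht0]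
    have A' := hasSum_coe_mul_geometric_of_norm_lt_one (𝕜 := ℝ) hnorm
    have B := hasSum_geometric_of_lt_one ht0 ht1
    have C := ((A'.mul_left (1 - x)).add (B.mul_left (2 - x))).mul_left (1 / (b - 1))
    have hs : HasSum (fun k : ℕ => p k * ((k : ℝ) * x ^ (k - 2) - ((k : ℝ) - 1) * x ^ (k - 1)))
        ((1 / (b - 1)) * ((1 - x) * (t / (1 - t) ^ 2) + (2 - x) * (1 - t)⁻¹)) := by
      apply hasSum_shift2 (by simp [hp0]) (by simp [hp1])
      convert C using 1
      case e'_3 => rfl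
      funext n
      rw [hp2 n, htdef, show n + 2 - 2 = n from rfl, show n + 2 - 1 = n + 1 from rfl]
      push_cast
      rw [mul_pow]
      ring
    have hval : (1 / (b - 1)) * ((1 - x) * (t / (1 - t) ^ 2) + (2 - x) * (1 - t)⁻¹)
        = (2 * (b - 1) - (2 * b - 3) * x) / ((b - 1) - (b - 2) * x) ^ 2 := by
      rw [h1t, htdef, hr]
      field_simp
      ring
    rw [← hval]; exact hs.tsum_eq
  · intro hb5
    have h23 : (0:ℝ) < 2 * b - 3 := by linarith
    have h25 : (0:ℝ) ≤ 2 * b - 5 := by linarith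
    refine ⟨⟨by positivity, ?_⟩, ?_, ?_, ?_⟩
    · rw [div_le_one (by positivity)]; nlinarith
    · intro x hx
      obtain ⟨hx0, hx1⟩ := hx
      have hD : 0 < (b - 1) - (b - 2) * x := by nlinarith
      rw [div_le_div_iff₀ (by positivity) (by positivity)]
      nlinarith [sq_nonneg ((b - 2) * (2 * b - 3) * x - (2 * b - 5) * (b - 1))]
    · have hne : (b - 2) * (2 * b - 3) ≠ 0 := by positivity
      have hD : (b - 1) - (b - 2) * ((2 * b - 5) * (b - 1) / ((b - 2) * (2 * b - 3)))
          = 2 * (b - 1) / (2 * b - 3) := by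
        have h23' : b * 2 - 3 ≠ 0 := by linarith
        field_simp
        ring
      rw [hD]
      rw [div_pow]
      field_simp
      ring
    · field_simp
      ring
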